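/- In the diagonalization setting, fix an index j and a point β ∈ ℂ, and suppose the diagonal entry d_j has a pole of order t ≥ 1 at β (ord_β(d_j) = −t). Then: (1) Ŝ_j(β) ≠ 0; (2) Q⁻¹.mulVec Ŝ_j = d_j⁻¹ • T_j as vectors over RatFunc ℂ; (3) every nonzero component of Q⁻¹.mulVec Ŝ_j has ord_β ≥ t; and (4) at least one component of Q⁻¹.mulVec Ŝ_j has ord_β exactly equal to t. Thus Ŝ_j is a root function of Q⁻¹ at β of exact order t, i.e., a canonical pole function of Q at β. -/

import Mathlib

set_option synthInstance.maxHeartbeats 1000000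
set_option maxHeartbeats 1000000

/-- `HasOrdAt α r k` : the rational function `r` has order `k ∈ ℤ` at `α`, i.e.
`r = (X − α)^k · (p/q)` with `p(α) ≠ 0` and `q(α) ≠ 0`. -/
def HasOrdAt (α : ℂ) (r : RatFunc ℂ) (k : ℤ) : Prop :=
  ∃ p q : Polynomial ℂ, Polynomial.eval α p ≠ 0 ∧ Polynomial.eval α q ≠ 0 ∧
    r = (RatFunc.X - RatFunc.C α) ^ k *
      (algebraMap (Polynomial ℂ) (RatFunc ℂ) p / algebraMap (Polynomial ℂ) (RatFunc ℂ) q)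

lemma XC_ne_zero (β : ℂ) : (RatFunc.X - RatFunc.C β : RatFunc ℂ) ≠ 0 := by
  have h1 : (RatFunc.X - RatFunc.C β : RatFunc ℂ)
      = algebraMap (Polynomial ℂ) (RatFunc ℂ) (Polynomial.X - Polynomial.C β) := by
    rw [map_sub, RatFunc.algebraMap_X, RatFunc.algebraMap_C]
  rw [h1]
  exact RatFunc.algebraMap_ne_zero (Polynomial.X_sub_C_ne_zero β)

lemma hasOrdAt_inv {β : ℂ} {r : RatFunc ℂ} {k : ℤ} (h : HasOrdAt β r k) :
    HasOrdAt β r⁻¹ (-k) := by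
  obtain ⟨p, q, hp, hq, hr⟩ := h
  exact ⟨q, p, hq, hp, by rw [hr, mul_inv, ← zpow_neg, inv_div]⟩

lemma hasOrdAt_mul_poly {β : ℂ} {r : RatFunc ℂ} {k : ℤ} (h : HasOrdAt β r k)
    {f : Polynomial ℂ} (hf : f ≠ 0) :
    HasOrdAt β (r * algebraMap (Polynomial ℂ) (RatFunc ℂ) f)
      (k + (f.rootMultiplicity β : ℤ)) := by
  obtain ⟨p, q, hp, hq, hr⟩ := h
  set s := f.rootMultiplicity β with hs
  set u := f /ₘ (Polynomial.X - Polynomial.C β) ^ s with hu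
  have hfu : (Polynomial.X - Polynomial.C β) ^ s * u = f :=
    Polynomial.pow_mul_divByMonic_rootMultiplicity_eq f β
  have hue : Polynomial.eval β u ≠ 0 :=
    Polynomial.eval_divByMonic_pow_rootMultiplicity_ne_zero β hf
  refine ⟨p * u, q, by simp [hp, hue], hq, ?_⟩
  have hw : (RatFunc.X - RatFunc.C β : RatFunc ℂ) ≠ 0 := XC_ne_zero β
  have hmap : algebraMap (Polynomial ℂ) (RatFunc ℂ) f
      = (RatFunc.X - RatFunc.C β) ^ s * algebraMap (Polynomial ℂ) (RatFunc ℂ) u := by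
    rw [← hfu, map_mul, map_pow, map_sub, RatFunc.algebraMap_X, RatFunc.algebraMap_C]
  rw [hr, hmap, zpow_add₀ hw, zpow_natCast, map_mul]
  ring

lemma hasOrdAt_mul_poly_eval_ne {β : ℂ} {r : RatFunc ℂ} {k : ℤ} (h : HasOrdAt β r k)
    {f : Polynomial ℂ} (hf : Polynomial.eval β f ≠ 0) :
    HasOrdAt β (r * algebraMap (Polynomial ℂ) (RatFunc ℂ) f) k := by
  obtain ⟨p, q, hp, hq, hr⟩ := h
  refine ⟨p * f, q, by simp [hp, hf], hq, ?_⟩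
  rw [hr, map_mul]
  ring

/-- Entrywise embedding of a polynomial matrix into matrices over `RatFunc ℂ`. -/
noncomputable def matRF {n : ℕ} (M : Matrix (Fin n) (Fin n) (Polynomial ℂ)) :
    Matrix (Fin n) (Fin n) (RatFunc ℂ) :=
  M.map (algebraMap (Polynomial ℂ) (RatFunc ℂ))

/-- The `i`-th column of a polynomial matrix, regarded over `RatFunc ℂ`. -/
noncomputable def colRF {n : ℕ} (M : Matrix (Fin n) (Fin n) (Polynomial ℂ)) (i : Fin n) :
    Fin n → RatFunc ℂ :=
  fun k => algebraMap (Polynomial ℂ) (RatFunc ℂ) (M k i)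

/-- The `i`-th column of a polynomial matrix evaluated (entrywise) at `α`. -/
def evalCol {n : ℕ} (M : Matrix (Fin n) (Fin n) (Polynomial ℂ)) (i : Fin n) (α : ℂ) :
    Fin n → ℂ :=
  fun k => Polynomial.eval α (M k i)

lemma evalCol_ne_zero {n : ℕ} (M : Matrix (Fin n) (Fin n) (Polynomial ℂ))
    (hM : IsUnit M.det) (i : Fin n) (β : ℂ) : evalCol M i β ≠ 0 := by
  intro h0
  have hdet : IsUnit (Polynomial.eval β M.det) := hM.map (Polynomial.evalRingHom β)
  have hmapdet : (Polynomial.evalRingHom β) M.det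
      = (M.map (Polynomial.evalRingHom β)).det := RingHom.map_det _ M
  have hcol : ∀ k, (M.map (Polynomial.evalRingHom β)) k i = 0 := by
    intro k
    simpa [evalCol, Matrix.map_apply] using congrFun h0 k
  have hz : (M.map (Polynomial.evalRingHom β)).det = 0 :=
    Matrix.det_eq_zero_of_column_eq_zero i hcol
  rw [hz] at hmapdet
  exact hdet.ne_zero (by simpa using hmapdet)

/-- In the diagonalization setting `D = S·Q·T`, if the diagonal entry
`d_j = D j j` has a pole of order `t ≥ 1` at `β` (i.e. `ord_β(d_j) = −t`), then
`Ŝ_j(β) ≠ 0`, `Q⁻¹.mulVec Ŝ_j = d_j⁻¹ • T_j`, every nonzero component of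
`Q⁻¹.mulVec Ŝ_j` has order `≥ t` at `β`, and some component has order exactly `t`:
`Ŝ_j` is a root function of `Q⁻¹` at `β` of exact order `t`, i.e. a canonical pole
function of `Q` at `β`. -/
theorem column_of_S_inv_is_root_function_of_Q_inv_of_exact_order
    (n : ℕ) (hn : 1 ≤ n)
    (Q : Matrix (Fin n) (Fin n) (RatFunc ℂ)) (hQ : Q.det ≠ 0)
    (S T : Matrix (Fin n) (Fin n) (Polynomial ℂ))
    (hS : IsUnit S.det) (hT : IsUnit T.det)
    (D : Matrix (Fin n) (Fin n) (RatFunc ℂ))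
    (hD : D = matRF S * Q * matRF T) (hdiag : D.IsDiag)
    (j : Fin n) (β : ℂ) (t : ℕ) (ht : 1 ≤ t)
    (hpole : HasOrdAt β (D j j) (-(t : ℤ))) :
    evalCol (S⁻¹) j β ≠ 0 ∧
    Q⁻¹.mulVec (colRF (S⁻¹) j) = (D j j)⁻¹ • colRF T j ∧
    (∀ k : Fin n, Q⁻¹.mulVec (colRF (S⁻¹) j) k ≠ 0 →
      ∃ m : ℤ, HasOrdAt β (Q⁻¹.mulVec (colRF (S⁻¹) j) k) m ∧ (t : ℤ) ≤ m) ∧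
    (∃ k : Fin n, HasOrdAt β (Q⁻¹.mulVec (colRF (S⁻¹) j) k) (t : ℤ)) := by
  set φ := algebraMap (Polynomial ℂ) (RatFunc ℂ) with hφ
  set A := matRF S with hA
  set B := matRF T with hB
  -- determinants
  have hAdet : IsUnit A.det := by
    have : A.det = φ S.det := (RingHom.map_det φ S).symm
    rw [this]
    exact hS.map φ
  have hBdet : IsUnit B.det := by
    have : B.det = φ T.det := (RingHom.map_det φ T).symm
    rw [this]
    exact hT.map φ
  have hDdet : D.det ≠ 0 := by
    rw [hD, Matrix.det_mul, Matrix.det_mul]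
    exact mul_ne_zero (mul_ne_zero hAdet.ne_zero hQ) hBdet.ne_zero
  have hDinvD : D⁻¹ * D = 1 := Matrix.nonsing_inv_mul D (isUnit_iff_ne_zero.mpr hDdet)
  -- mapped inverses
  have hSinvS : S⁻¹ * S = 1 := Matrix.nonsing_inv_mul S hS
  have hAinv : matRF (S⁻¹) * A = 1 := by
    have := congrArg (fun M => φ.mapMatrix M) hSinvS
    simpa [matRF, RingHom.mapMatrix_apply, map_mul, hA, hφ] using this
  have hAinv_eq : matRF (S⁻¹) = A⁻¹ := (Matrix.inv_eq_left_inv hAinv).symm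
  -- Q⁻¹ = B * D⁻¹ * A
  have e1 : (B * D⁻¹ * A) * Q * B = B := by
    calc (B * D⁻¹ * A) * Q * B = B * (D⁻¹ * (A * Q * B)) := by
          simp only [Matrix.mul_assoc]
      _ = B * (D⁻¹ * D) := by rw [← hD]
      _ = B := by rw [hDinvD, Matrix.mul_one]
  have e2 : (B * D⁻¹ * A) * Q = 1 := by
    have := congrArg (fun M => M * B⁻¹) e1
    simpa [Matrix.mul_assoc, Matrix.mul_nonsing_inv _ hBdet] using this
  have hQinv : Q⁻¹ = B * D⁻¹ * A := Matrix.inv_eq_left_inv e2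
  -- D⁻¹ is diagonal
  have hDdiagonal : D = Matrix.diagonal D.diag := hdiag.diagonal_diag.symm
  have hdiagne : ∀ i, D i i ≠ 0 := by
    have hdet2 : D.det = ∏ i, D i i := by
      conv_lhs => rw [hDdiagonal]
      simp [Matrix.det_diagonal, Matrix.diag]
    intro i hi
    apply hDdet
    rw [hdet2]
    exact Finset.prod_eq_zero (Finset.mem_univ i) hi
  have hDinv_diag : D⁻¹ = Matrix.diagonal (fun i => (D i i)⁻¹) := by
    apply Matrix.inv_eq_left_inv
    conv_lhs => rw [hDdiagonal]
    rw [Matrix.diagonal_mul_diagonal]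
    ext i k
    rcases eq_or_ne i k with rfl | h
    · simp [Matrix.diag, inv_mul_cancel₀ (hdiagne i)]
    · simp [Matrix.diagonal_apply_ne _ h, Matrix.one_apply_ne h]
  -- key componentwise formula
  have hQS : Q⁻¹ * matRF (S⁻¹) = B * D⁻¹ := by
    rw [hQinv, hAinv_eq, Matrix.mul_assoc, Matrix.mul_nonsing_inv _ hAdet, Matrix.mul_one]
  have key : ∀ k, Q⁻¹.mulVec (colRF (S⁻¹) j) k = (D j j)⁻¹ * φ (T k j) := by
    intro k
    have h1 : Q⁻¹.mulVec (colRF (S⁻¹) j) k = (Q⁻¹ * matRF (S⁻¹)) k j := by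
      simp [Matrix.mulVec, dotProduct, Matrix.mul_apply, colRF, matRF,
        Matrix.map_apply]
    rw [h1, hQS, hDinv_diag, Matrix.mul_diagonal]
    rw [mul_comm]
    rfl
  have hdinv : HasOrdAt β (D j j)⁻¹ (t : ℤ) := by
    simpa using hasOrdAt_inv hpole
  refine ⟨?_, ?_, ?_, ?_⟩
  · -- (1)
    have hSdetinv : IsUnit (S⁻¹).det := by
      apply IsUnit.of_mul_eq_one S.det
      rw [← Matrix.det_mul, hSinvS, Matrix.det_one]
    exact evalCol_ne_zero (S⁻¹) hSdetinv j β
  · -- (2)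
    funext k
    rw [key k]
    simp [colRF, Pi.smul_apply, smul_eq_mul, hφ]
  · -- (3)
    intro k hk
    rw [key k] at hk
    have hTkj : T k j ≠ 0 := by
      intro h
      apply hk
      rw [h, map_zero, mul_zero]
    refine ⟨(t : ℤ) + ((T k j).rootMultiplicity β : ℤ), ?_, le_add_of_nonneg_right (by positivity)⟩
    rw [key k]
    exact hasOrdAt_mul_poly hdinv hTkj
  · -- (4)
    have := evalCol_ne_zero T hT j β
    rw [Function.ne_iff] at this
    obtain ⟨k0, hk0⟩ := this
    refine ⟨k0, ?_⟩
    rw [key k0]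
    exact hasOrdAt_mul_poly_eval_ne hdinv hk0
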